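/- In the complete graph setting with disturbance only at node i (b_i ≠ 0, b_j = 0 for j ≠ i), the frequency variances satisfy: q_{ω,ii} = b_i²/(2dη) − (n−1)γb_i²/(dn(2d²+γηn)) at the source node and q_{ω,jj} = γb_i²/(dn(2d²+γηn)) for every other node j. Moreover ∂q_{ω,ii}/∂γ < 0 and ∂q_{ω,jj}/∂γ > 0. -/

import Mathlib

open Matrix

/-- Complete graph with a single disturbance at node `i0`: explicit source and non-source
frequency variances, and their monotonicity in the line weight `γ`. -/
theorem stmt_11 (n : ℕ) (hn : 2 ≤ n) (η d γ : ℝ) (hη : 0 < η) (hd : 0 < d) (hγ : 0 < γ)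
    (b : Fin n → ℝ) (i0 : Fin n) (hb0 : ∀ j, j ≠ i0 → b j = 0) (hbi : b i0 ≠ 0) :
    let α := d / η
    let B2 : Matrix (Fin n) (Fin n) ℝ := Matrix.diagonal fun i => (b i) ^ 2
    let J : Matrix (Fin n) (Fin n) ℝ := Matrix.of fun _ _ => 1 / (n : ℝ)
    let Qω : Matrix (Fin n) (Fin n) ℝ :=
      (1 / η ^ 2) • ((1 / (2 * α)) • B2
        + (α / (2 * α ^ 2 + γ * n / η) - 1 / (2 * α)) • (J * B2 + B2 * J)
        + (1 / α - 2 * α / (2 * α ^ 2 + γ * n / η)) • (J * B2 * J))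
    Qω i0 i0 = (b i0) ^ 2 / (2 * d * η)
        - ((n : ℝ) - 1) * γ * (b i0) ^ 2 / (d * n * (2 * d ^ 2 + γ * η * n)) ∧
    (∀ j, j ≠ i0 → Qω j j = γ * (b i0) ^ 2 / (d * n * (2 * d ^ 2 + γ * η * n))) ∧
    deriv (fun g : ℝ => (b i0) ^ 2 / (2 * d * η)
        - ((n : ℝ) - 1) * g * (b i0) ^ 2 / (d * n * (2 * d ^ 2 + g * η * n))) γ < 0 ∧
    0 < deriv (fun g : ℝ =>
        g * (b i0) ^ 2 / (d * n * (2 * d ^ 2 + g * η * n))) γ := by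
  intro α B2 J Qω
  have hn0 : (0:ℝ) < (n:ℝ) := by exact_mod_cast lt_of_lt_of_le (by norm_num) hn
  have hn1 : (1:ℝ) ≤ (n:ℝ) - 1 := by
    have : (2:ℝ) ≤ (n:ℝ) := by exact_mod_cast hn
    linarith
  have hc : 0 < (b i0)^2 := by positivity
  have hM : (0:ℝ) < 2 * d ^ 2 + γ * η * n := by positivity
  have hK : (0:ℝ) < 2 * α ^ 2 + γ * n / η := by positivity
  have hD0 : d * (n:ℝ) * (2 * d ^ 2 + γ * η * n) ≠ 0 := by positivity
  -- entries
  have hB2 : ∀ i j, B2 i j = if i = j then (b j)^2 else 0 := by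
    intro i j
    simp only [B2, Matrix.diagonal_apply]
    split_ifs with h
    · rw [h]
    · rfl
  have hJB : ∀ i j, (J * B2) i j = (b j)^2 / n := by
    intro i j
    simp [Matrix.mul_apply, B2, J, Matrix.diagonal_apply, div_eq_mul_inv, mul_comm]
  have hBJ : ∀ i j, (B2 * J) i j = (b i)^2 / n := by
    intro i j
    simp [Matrix.mul_apply, B2, J, Matrix.diagonal_apply, div_eq_mul_inv]
  have hsum : ∑ k, (b k)^2 = (b i0)^2 := by
    rw [Finset.sum_eq_single i0]
    · intro k _ hk; rw [hb0 k hk]; ring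
    · simp
  have hJBJ : ∀ i j, (J * B2 * J) i j = (b i0)^2 / (n:ℝ)^2 := by
    intro i j
    simp only [Matrix.mul_apply, hJB, J, Matrix.of_apply]
    simp only [mul_one_div]
    rw [← Finset.sum_div, ← Finset.sum_div, hsum]
    ring
  have hQ : ∀ i j, Qω i j = (1 / η ^ 2) * ((1 / (2 * α)) * B2 i j
      + (α / (2 * α ^ 2 + γ * n / η) - 1 / (2 * α)) * ((J * B2) i j + (B2 * J) i j)
      + (1 / α - 2 * α / (2 * α ^ 2 + γ * n / η)) * ((J * B2 * J) i j)) := by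
    intro i j
    simp [Qω, Matrix.add_apply, Matrix.smul_apply, smul_eq_mul, mul_add]
  have hne : (2 * α ^ 2 + γ * n / η) ≠ 0 := ne_of_gt hK
  refine ⟨?_, ?_, ?_, ?_⟩
  · rw [hQ, hB2, hJB, hBJ, hJBJ]
    simp only [if_pos rfl, α]
    field_simp
    rw [if_pos trivial]
    ring
  · intro j hj
    rw [hQ, hB2, hJB, hBJ, hJBJ, hb0 j hj]
    simp only [if_pos rfl, α]
    norm_num
    field_simp
    ring
  · -- derivative at source node
    have hden : HasDerivAt (fun g : ℝ => d * (n:ℝ) * (2 * d ^ 2 + g * η * n))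
        (d * n * (η * n)) γ := by
      have h0 : HasDerivAt (fun g : ℝ => 2 * d ^ 2 + g * η * n) (η * n) γ := by
        simpa using (((hasDerivAt_id γ).mul_const η).mul_const (n:ℝ)).const_add (2 * d ^ 2)
      simpa [mul_comm, mul_assoc, mul_left_comm] using h0.const_mul (d * (n:ℝ))
    have hnum : HasDerivAt (fun g : ℝ => ((n:ℝ) - 1) * g * (b i0) ^ 2)
        (((n:ℝ) - 1) * (b i0) ^ 2) γ := by
      simpa [mul_comm, mul_assoc, mul_left_comm] using
        (((hasDerivAt_id γ).const_mul ((n:ℝ) - 1)).mul_const ((b i0) ^ 2))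
    have hdiv := hnum.div hden hD0
    have hfull := (hasDerivAt_const γ ((b i0) ^ 2 / (2 * d * η))).sub hdiv
    rw [HasDerivAt.deriv (f := fun g : ℝ => (b i0) ^ 2 / (2 * d * η)
        - ((n : ℝ) - 1) * g * (b i0) ^ 2 / (d * n * (2 * d ^ 2 + g * η * n))) hfull]
    have hnumval : (0:ℝ) < (((n:ℝ) - 1) * (b i0) ^ 2 * (d * ↑n * (2 * d ^ 2 + γ * η * ↑n))
        - ((n:ℝ) - 1) * γ * (b i0) ^ 2 * (d * ↑n * (η * ↑n))) := by
      have : (((n:ℝ) - 1) * (b i0) ^ 2 * (d * ↑n * (2 * d ^ 2 + γ * η * ↑n))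
          - ((n:ℝ) - 1) * γ * (b i0) ^ 2 * (d * ↑n * (η * ↑n)))
          = ((n:ℝ) - 1) * (b i0) ^ 2 * (d * ↑n * (2 * d ^ 2)) := by ring
      rw [this]
      have h1 : (0:ℝ) < (n:ℝ) - 1 := by linarith
      positivity
    have hd2 : (0:ℝ) < (d * ↑n * (2 * d ^ 2 + γ * η * ↑n)) ^ 2 := by positivity
    have := div_pos hnumval hd2
    linarith [this]
  · -- derivative at non-source node
    have hden : HasDerivAt (fun g : ℝ => d * (n:ℝ) * (2 * d ^ 2 + g * η * n))
        (d * n * (η * n)) γ := by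
      have h0 : HasDerivAt (fun g : ℝ => 2 * d ^ 2 + g * η * n) (η * n) γ := by
        simpa using (((hasDerivAt_id γ).mul_const η).mul_const (n:ℝ)).const_add (2 * d ^ 2)
      simpa [mul_comm, mul_assoc, mul_left_comm] using h0.const_mul (d * (n:ℝ))
    have hnum : HasDerivAt (fun g : ℝ => g * (b i0) ^ 2) ((b i0) ^ 2) γ := by
      simpa using (hasDerivAt_id γ).mul_const ((b i0) ^ 2)
    have hdiv := hnum.div hden hD0
    rw [HasDerivAt.deriv (f := fun g : ℝ =>
        g * (b i0) ^ 2 / (d * n * (2 * d ^ 2 + g * η * n))) hdiv]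
    apply div_pos
    · have : ((b i0) ^ 2 * (d * ↑n * (2 * d ^ 2 + γ * η * ↑n))
          - γ * (b i0) ^ 2 * (d * ↑n * (η * ↑n)))
          = (b i0) ^ 2 * (d * ↑n * (2 * d ^ 2)) := by ring
      rw [this]
      positivity
    · positivity
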